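/- Let (W, S) be a Coxeter system, let J, K ⊆ S, and let w̄ ∈ ᴶW ∩ Wᴷ. Set K' = K ∩ (w̄⁻¹ J w̄) and J' = J ∩ (w̄ K w̄⁻¹). If w ∈ w̄ · W_K, then the unique decomposition w = u · w̄ · v with u ∈ W_J and v ∈ W_K ∩ ᴷ'W (given by Howlett's lemma) in fact satisfies u ∈ W_{J'}. -/

import Mathlib

open CoxeterSystem

variable {B W : Type*} [Group W] {M : CoxeterMatrix B}

/-- The strong Bruhat order on a Coxeter group: the reflexive-transitive closure of the
relation relating `a` to `a * t` where `t` is a reflection and the length increases. -/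
def bruhatLE (cs : CoxeterSystem M W) (u v : W) : Prop :=
  Relation.ReflTransGen
    (fun a b => ∃ t : W, cs.IsReflection t ∧ b = a * t ∧ cs.length a < cs.length b) u v

/-- `ᴶW`: the set of `w` with `ℓ(s w) > ℓ(w)` for all `s ∈ J`, i.e. the minimal length
representatives of the cosets `W_J \ W`. Here `J` is a set of simple reflections of `W`. -/
def minLeft (cs : CoxeterSystem M W) (J : Set W) : Set W :=
  {w | ∀ s ∈ J, cs.length w < cs.length (s * w)}

/-- `Wᴶ`: the set of `w` with `ℓ(w s) > ℓ(w)` for all `s ∈ J`, i.e. the minimal length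
representatives of the cosets `W / W_J`. -/
def minRight (cs : CoxeterSystem M W) (J : Set W) : Set W :=
  {w | ∀ s ∈ J, cs.length w < cs.length (w * s)}

namespace HowlettAux

open CoxeterSystem List

variable {B W : Type*} [Group W] {M : CoxeterMatrix B} (cs : CoxeterSystem M W)

noncomputable local instance : DecidableEq W := Classical.decEq W

local prefix:100 "s" => cs.simple
local prefix:100 "π" => cs.wordProd
local prefix:100 "ℓ" => cs.length
local prefix:100 "ris" => cs.rightInvSeq

/-- Indicator function with values in `ZMod 2`. -/
noncomputable def eind (a b : W) : ZMod 2 := if a = b then 1 else 0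

theorem eind_conj (g t h : W) : eind (g * t * g⁻¹) h = eind t (g⁻¹ * h * g) := by
  unfold eind
  congr 1
  apply propext
  constructor
  · rintro rfl; group
  · rintro rfl; group

theorem simple_conj_conj (i : B) (x : W) : s i * (s i * x * s i) * s i = x := by
  have h := cs.simple_mul_simple_self i
  calc s i * (s i * x * s i) * s i = (s i * s i) * x * (s i * s i) := by group
    _ = x := by rw [h]; group

/-- The function underlying the reflection-parity representation at a generator. -/
noncomputable def muF (i : B) : W × ZMod 2 → W × ZMod 2 :=
  fun p => (s i * p.1 * s i, p.2 + eind p.1 (s i))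

theorem muF_invol (i : B) : Function.Involutive (muF cs i) := by
  intro p
  unfold muF
  ext
  · exact simple_conj_conj cs i p.1
  · simp only
    have h : (s i * p.1 * s i = s i) ↔ p.1 = s i := by
      constructor
      · intro h
        have h2 := congrArg (fun x => s i * x * s i) h
        beta_reduce at h2
        rw [simple_conj_conj] at h2
        rw [h2, cs.simple_mul_simple_self, one_mul]
      · rintro h; rw [h, cs.simple_mul_simple_self, one_mul]
    by_cases hc : p.1 = s i
    · rw [eind, eind, if_pos hc, if_pos (h.mpr hc), add_assoc]
      have : (1 : ZMod 2) + 1 = 0 := by decide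
      rw [this, add_zero]
    · rw [eind, eind, if_neg hc, if_neg (fun hh => hc (h.mp hh))]
      simp

/-- The reflection-parity involution at a generator, as a permutation. -/
noncomputable def mu (i : B) : Equiv.Perm (W × ZMod 2) := (muF_invol cs i).toPerm

theorem mu_apply (i : B) (t : W) (ε : ZMod 2) :
    mu cs i (t, ε) = (s i * t * s i, ε + eind t (s i)) := rfl

theorem mu_mul_apply (i i' : B) (t : W) (ε : ZMod 2) :
    (mu cs i * mu cs i') (t, ε) =
      ((s i * s i') * t * (s i * s i')⁻¹,
        ε + eind t (s i' * (s i * s i') ^ 0) + eind t (s i' * (s i * s i') ^ 1)) := by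
  rw [Equiv.Perm.mul_apply, mu_apply, mu_apply]
  have h1 : s i * (s i' * t * s i') * s i = (s i * s i') * t * (s i * s i')⁻¹ := by
    rw [mul_inv_rev, cs.inv_simple, cs.inv_simple]; group
  rw [h1]
  congr 1
  rw [add_assoc, add_assoc]
  congr 1
  congr 1
  · rw [pow_zero, mul_one]
  · have h2 : s i' * t * s i' = s i' * t * (s i')⁻¹ := by rw [cs.inv_simple]
    rw [h2, eind_conj, cs.inv_simple, pow_one]
    congr 1
    group

theorem pow_inv_mul_simple (i i' : B) (m : ℕ) :
    ((s i * s i') ^ m)⁻¹ * s i' = s i' * (s i * s i') ^ m := by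
  induction m with
  | zero => simp
  | succ m ihm =>
      have hstep : (s i * s i')⁻¹ * s i' = s i' * (s i * s i') := by
        rw [mul_inv_rev, cs.inv_simple, cs.inv_simple]; group
      calc ((s i * s i') ^ (m + 1))⁻¹ * s i'
          = ((s i * s i') ^ m)⁻¹ * ((s i * s i')⁻¹ * s i') := by
            rw [pow_succ', mul_inv_rev, mul_assoc]
        _ = ((s i * s i') ^ m)⁻¹ * s i' * (s i * s i') := by rw [hstep]; group
        _ = s i' * (s i * s i') ^ m * (s i * s i') := by rw [ihm]
        _ = s i' * (s i * s i') ^ (m + 1) := by rw [mul_assoc, ← pow_succ]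

theorem mu_mul_pow_apply (i i' : B) (k : ℕ) (t : W) (ε : ZMod 2) :
    ((mu cs i * mu cs i') ^ k) (t, ε) =
      ((s i * s i') ^ k * t * ((s i * s i') ^ k)⁻¹,
        ε + ∑ r ∈ Finset.range (2 * k), eind t (s i' * (s i * s i') ^ r)) := by
  induction k generalizing ε with
  | zero => simp
  | succ k ih =>
      rw [pow_succ', Equiv.Perm.mul_apply, ih, mu_mul_apply]
      set p := s i * s i' with hp
      have key : ∀ r : ℕ, eind (p ^ k * t * (p ^ k)⁻¹) (s i' * p ^ r)
          = eind t (s i' * p ^ (2 * k + r)) := by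
        intro r
        rw [eind_conj]
        congr 1
        calc (p ^ k)⁻¹ * (s i' * p ^ r) * p ^ k
            = ((p ^ k)⁻¹ * s i') * (p ^ r * p ^ k) := by group
          _ = (s i' * p ^ k) * (p ^ r * p ^ k) := by rw [pow_inv_mul_simple]
          _ = s i' * p ^ (2 * k + r) := by
              rw [mul_assoc, ← pow_add, ← pow_add]; congr 2; omega
      rw [key 0, key 1]
      rw [Prod.mk.injEq]
      refine ⟨by group, ?_⟩
      · have hrange : 2 * (k + 1) = (2 * k + 1) + 1 := by omega
        rw [hrange, Finset.sum_range_succ, Finset.sum_range_succ, Nat.add_zero]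
        abel

theorem mu_liftable : CoxeterMatrix.IsLiftable M (mu cs) := by
  intro i i'
  ext ⟨t, ε⟩
  · rw [mu_mul_pow_apply, cs.simple_mul_simple_pow]
    simp
  · rw [mu_mul_pow_apply]
    simp only [Equiv.Perm.one_apply]
    have h2 : (2 : ℕ) * M i i' = M i i' + M i i' := by omega
    rw [h2, Finset.sum_range_add]
    have heq : ∀ r ∈ Finset.range (M i i'),
        eind t (s i' * (s i * s i') ^ (M i i' + r)) = eind t (s i' * (s i * s i') ^ r) := by
      intro r _
      congr 2
      rw [pow_add, cs.simple_mul_simple_pow, one_mul]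
    rw [Finset.sum_congr rfl heq]
    have hxx : ∀ x : ZMod 2, x + x = 0 := by decide
    rw [hxx, add_zero]


/-- The reflection-parity representation. -/
noncomputable def rho : W →* Equiv.Perm (W × ZMod 2) := cs.lift ⟨mu cs, mu_liftable cs⟩

theorem rho_simple (i : B) : rho cs (s i) = mu cs i := cs.lift_apply_simple (mu_liftable cs) i

/-- Parity of the number of occurrences of `t` in the right inversion sequence of `ω`. -/
noncomputable def etaWord : List B → W → ZMod 2
  | [], _ => 0
  | (i :: ω), t => eind t ((π ω)⁻¹ * s i * (π ω)) + etaWord ω t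

theorem rho_wordProd (ω : List B) (t : W) (ε : ZMod 2) :
    rho cs (π ω) (t, ε) = (π ω * t * (π ω)⁻¹, ε + etaWord cs ω t) := by
  induction ω generalizing ε with
  | nil => simp [etaWord]
  | cons i ω ih =>
      rw [cs.wordProd_cons, map_mul, Equiv.Perm.mul_apply, ih, rho_simple, mu_apply]
      rw [Prod.mk.injEq]
      constructor
      · rw [mul_inv_rev, cs.inv_simple]; group
      · have h1 : π ω * t * (π ω)⁻¹ = π ω * t * (π ω)⁻¹ := rfl
        rw [eind_conj]
        show ε + etaWord cs ω t + eind t ((π ω)⁻¹ * s i * π ω) = ε + etaWord cs (i :: ω) t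
        rw [etaWord]
        abel

/-- The parity invariant `η(w, t)`. -/
noncomputable def eta (w t : W) : ZMod 2 := (rho cs w (t, 0)).2

theorem eta_eq_etaWord (ω : List B) (t : W) : eta cs (π ω) t = etaWord cs ω t := by
  rw [eta, rho_wordProd, zero_add]

theorem rho_apply (w t : W) (ε : ZMod 2) :
    rho cs w (t, ε) = (w * t * w⁻¹, ε + eta cs w t) := by
  obtain ⟨ω, rfl⟩ := cs.wordProd_surjective w
  rw [rho_wordProd, eta_eq_etaWord]

theorem mem_ris_of_etaWord_ne_zero {ω : List B} {t : W} (h : etaWord cs ω t ≠ 0) :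
    t ∈ ris ω := by
  induction ω with
  | nil => rw [etaWord] at h; exact absurd rfl h
  | cons i ω ih =>
      rw [etaWord] at h
      show t ∈ cs.rightInvSeq (i :: ω)
      rw [rightInvSeq]
      by_cases hc : t = (π ω)⁻¹ * s i * (π ω)
      · rw [hc]; exact List.mem_cons_self
      · rw [eind, if_neg hc, zero_add] at h
        exact List.mem_cons_of_mem _ (ih h)

theorem length_mul_lt_of_eta_ne_zero {w t : W} (h : eta cs w t ≠ 0) :
    ℓ (w * t) < ℓ w := by
  obtain ⟨ω, hred, rfl⟩ := cs.exists_reduced_word' w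
  rw [eta_eq_etaWord] at h
  have hmem := mem_ris_of_etaWord_ne_zero cs h
  obtain ⟨j, hj, hget⟩ := List.getElem_of_mem hmem
  rw [cs.length_rightInvSeq] at hj
  have hgetD : (ris ω).getD j 1 = t := by
    rw [List.getD_eq_getElem _ _ (by rw [cs.length_rightInvSeq]; exact hj)]
    exact hget
  have hprod := cs.wordProd_mul_getD_rightInvSeq ω j
  rw [hgetD] at hprod
  rw [hprod]
  calc ℓ (π (ω.eraseIdx j)) ≤ (ω.eraseIdx j).length := cs.length_wordProd_le _
    _ < ω.length := by rw [List.length_eraseIdx_of_lt hj]; omega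
    _ = ℓ (π ω) := hred.symm

theorem eta_refl {t : W} (ht : cs.IsReflection t) : eta cs t t = 1 := by
  obtain ⟨u, k, rfl⟩ := ht
  set t := u * s k * u⁻¹ with hts
  have hk : u⁻¹ * t * (u⁻¹)⁻¹ = s k := by rw [hts]; group
  have hA : rho cs u⁻¹ (t, 0) = (s k, eta cs u⁻¹ t) := by
    rw [rho_apply, hk, zero_add]
  have hB : rho cs (s k) (s k, eta cs u⁻¹ t) = (s k, eta cs u⁻¹ t + 1) := by
    rw [rho_simple, mu_apply, eind, if_pos rfl, cs.simple_mul_simple_self, one_mul]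
  have hC : rho cs u (s k, eta cs u⁻¹ t + 1)
      = (t, eta cs u⁻¹ t + 1 + eta cs u (s k)) := by
    rw [rho_apply, hts]
  have hzero : eta cs u⁻¹ t + eta cs u (s k) = 0 := by
    have h0 : rho cs u (rho cs u⁻¹ (t, 0)) = (t, 0) := by
      rw [← Equiv.Perm.mul_apply, ← map_mul, mul_inv_cancel, map_one, Equiv.Perm.one_apply]
    rw [hA, rho_apply, hts] at h0
    have := congrArg Prod.snd h0
    simpa using this
  have hcomp : rho cs t (t, 0) = (t, eta cs u⁻¹ t + 1 + eta cs u (s k)) := by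
    have : rho cs t = rho cs u * (rho cs (s k) * rho cs u⁻¹) := by
      rw [← map_mul, ← map_mul, hts, mul_assoc]
    rw [this, Equiv.Perm.mul_apply, Equiv.Perm.mul_apply, hA, hB, hC]
  rw [eta, hcomp]
  show eta cs u⁻¹ t + 1 + eta cs u (s k) = 1
  calc eta cs u⁻¹ t + 1 + eta cs u (s k)
      = (eta cs u⁻¹ t + eta cs u (s k)) + 1 := by abel
    _ = 1 := by rw [hzero, zero_add]

theorem eta_mul_refl {t : W} (ht : cs.IsReflection t) (w : W) :
    eta cs (w * t) t = eta cs w t + 1 := by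
  have : rho cs (w * t) (t, 0) = rho cs w (rho cs t (t, 0)) := by
    rw [← Equiv.Perm.mul_apply, ← map_mul]
  have h1 : rho cs t (t, 0) = (t * t * t⁻¹, eta cs t t) := by rw [rho_apply, zero_add]
  have h2 : t * t * t⁻¹ = t := by group
  rw [eta, this, h1, h2, eta_refl cs ht, rho_apply]
  show 1 + eta cs w t = eta cs w t + 1
  abel

/-- If `ℓ(w t) < ℓ(w)` for a reflection `t`, then `η(w,t) = 1`. -/
theorem eta_eq_one_of_lt {w t : W} (ht : cs.IsReflection t)
    (hlt : ℓ (w * t) < ℓ w) : eta cs w t = 1 := by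
  rcases (by decide : ∀ x : ZMod 2, x = 0 ∨ x = 1) (eta cs w t) with h | h
  · exfalso
    have h1 : eta cs (w * t) t = 1 := by rw [eta_mul_refl cs ht, h, zero_add]
    have h2 : ℓ (w * t * t) < ℓ (w * t) :=
      length_mul_lt_of_eta_ne_zero cs (by rw [h1]; exact one_ne_zero)
    rw [mul_assoc, ht.mul_self, mul_one] at h2
    omega
  · exact h

/-- The strong exchange property (right version). -/
theorem strong_exchange {w t : W} (ht : cs.IsReflection t) (hlt : ℓ (w * t) < ℓ w)
    {ω : List B} (hred : cs.IsReduced ω) (hw : π ω = w) :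
    ∃ j < ω.length, w * t = π (ω.eraseIdx j) := by
  have h1 : eta cs w t = 1 := eta_eq_one_of_lt cs ht hlt
  have hmem : t ∈ ris ω := by
    apply mem_ris_of_etaWord_ne_zero cs
    rw [← eta_eq_etaWord, hw, h1]
    exact one_ne_zero
  obtain ⟨j, hj, hget⟩ := List.getElem_of_mem hmem
  rw [cs.length_rightInvSeq] at hj
  refine ⟨j, hj, ?_⟩
  have hgetD : (ris ω).getD j 1 = t := by
    rw [List.getD_eq_getElem _ _ (by rw [cs.length_rightInvSeq]; exact hj)]
    exact hget
  have hprod := cs.wordProd_mul_getD_rightInvSeq ω j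
  rw [hgetD, hw] at hprod
  exact hprod


theorem wordProd_mem_closure {K : Set W} {ω : List B} (h : ∀ i ∈ ω, s i ∈ K) :
    π ω ∈ Subgroup.closure K := by
  induction ω with
  | nil => rw [cs.wordProd_nil]; exact one_mem _
  | cons i ω ih =>
      rw [cs.wordProd_cons]
      exact mul_mem (Subgroup.subset_closure (h i List.mem_cons_self))
        (ih fun j hj => h j (List.mem_cons_of_mem i hj))

theorem exists_word_subset {K : Set W} (hK : K ⊆ Set.range cs.simple) {u : W}
    (hu : u ∈ Subgroup.closure K) : ∃ ω : List B, π ω = u ∧ ∀ i ∈ ω, s i ∈ K := by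
  induction hu using Subgroup.closure_induction with
  | mem x hx =>
      obtain ⟨i, hi⟩ := hK hx
      exact ⟨[i], by simpa using hi, by simpa [hi] using hx⟩
  | one => exact ⟨[], by simp, by simp⟩
  | mul x y _ _ hx hy =>
      obtain ⟨ω₁, h1, h1'⟩ := hx
      obtain ⟨ω₂, h2, h2'⟩ := hy
      exact ⟨ω₁ ++ ω₂, by rw [cs.wordProd_append, h1, h2], by
        intro i hi
        rcases List.mem_append.mp hi with h | h
        · exact h1' i h
        · exact h2' i h⟩
  | inv x _ hx =>
      obtain ⟨ω, h1, h1'⟩ := hx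
      exact ⟨ω.reverse, by rw [cs.wordProd_reverse, h1], by
        intro i hi; exact h1' i (List.mem_reverse.mp hi)⟩

theorem exists_reduced_word_subset' (n : ℕ) :
    ∀ ω : List B, ω.length ≤ n →
    ∃ κ : List B, cs.IsReduced κ ∧ π κ = π ω ∧ ∀ i ∈ κ, (i ∈ ω) := by
  induction n with
  | zero =>
      intro ω hω
      rw [Nat.le_zero, List.length_eq_zero_iff] at hω
      exact ⟨[], by simp [hω, CoxeterSystem.IsReduced], by simp [hω], by simp⟩
  | succ n ih =>
      intro ω hω
      by_cases hred : cs.IsReduced ω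
      · exact ⟨ω, hred, rfl, fun i hi => hi⟩
      rcases List.eq_nil_or_concat ω with rfl | ⟨ω', i, rfl⟩
      · exact absurd (by simp [CoxeterSystem.IsReduced]) hred
      rw [List.concat_eq_append] at *
      by_cases hred' : cs.IsReduced ω'
      · -- exchange
        have hlen : ℓ (π (ω' ++ [i])) < (ω' ++ [i]).length :=
          lt_of_le_of_ne (cs.length_wordProd_le _) hred
        have hlt : ℓ (π ω' * s i) < ℓ (π ω') := by
          have h1 : π (ω' ++ [i]) = π ω' * s i := by
            rw [cs.wordProd_append, cs.wordProd_singleton]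
          rcases cs.length_mul_simple (π ω') i with h | h
          · exfalso
            rw [← h1] at h
            rw [h, hred'] at hlen
            simp only [List.length_append, List.length_singleton] at hlen
            omega
          · omega
        obtain ⟨j, hj, hex⟩ := strong_exchange cs (cs.isReflection_simple i) hlt hred' rfl
        have hlen2 : (ω'.eraseIdx j).length ≤ n := by
          rw [List.length_eraseIdx_of_lt hj]
          have : ω'.length + 1 ≤ n + 1 := by
            simpa using hω
          omega
        obtain ⟨κ, hκred, hκprod, hκsub⟩ := ih (ω'.eraseIdx j) hlen2
        refine ⟨κ, hκred, ?_, ?_⟩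
        · rw [hκprod, ← hex, cs.wordProd_append, cs.wordProd_singleton]
        · intro a ha
          exact List.mem_append_left _ (List.mem_of_mem_eraseIdx (hκsub a ha))
      · -- recurse on ω'
        have hlen' : ω'.length ≤ n := by
          have : ω'.length + 1 ≤ n + 1 := by simpa using hω
          omega
        obtain ⟨κ', hκ'red, hκ'prod, hκ'sub⟩ := ih ω' hlen'
        have hlt : κ'.length < ω'.length :=
          lt_of_le_of_ne (by rw [← hκ'red, hκ'prod]; exact cs.length_wordProd_le _)
            (fun h => hred' (by rw [CoxeterSystem.IsReduced, ← hκ'prod, hκ'red, h]))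
        have hlen2 : (κ' ++ [i]).length ≤ n := by
          simp only [List.length_append, List.length_singleton]
          have : ω'.length + 1 ≤ n + 1 := by simpa using hω
          omega
        obtain ⟨κ, hκred, hκprod, hκsub⟩ := ih (κ' ++ [i]) hlen2
        refine ⟨κ, hκred, ?_, ?_⟩
        · rw [hκprod, cs.wordProd_append, cs.wordProd_append, hκ'prod]
        · intro a ha
          rcases List.mem_append.mp (hκsub a ha) with h | h
          · exact List.mem_append_left _ (hκ'sub a h)
          · exact List.mem_append_right _ h

/-- Every element of a standard parabolic subgroup has a reduced word within the generators. -/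
theorem exists_reduced_word_subset {K : Set W} (hK : K ⊆ Set.range cs.simple) {u : W}
    (hu : u ∈ Subgroup.closure K) :
    ∃ ω : List B, cs.IsReduced ω ∧ π ω = u ∧ ∀ i ∈ ω, s i ∈ K := by
  obtain ⟨ω, hprod, hsub⟩ := exists_word_subset cs hK hu
  obtain ⟨κ, h1, h2, h3⟩ := exists_reduced_word_subset' cs ω.length ω le_rfl
  exact ⟨κ, h1, by rw [h2, hprod], fun i hi => hsub i (h3 i hi)⟩

/-- Parabolic descent: a nontrivial element of a parabolic has a right descent within it. -/
theorem parabolic_descent {K : Set W} (hK : K ⊆ Set.range cs.simple) {u : W}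
    (hu : u ∈ Subgroup.closure K) (hne : u ≠ 1) :
    ∃ i : B, s i ∈ K ∧ ℓ (u * s i) + 1 = ℓ u ∧ u * s i ∈ Subgroup.closure K := by
  obtain ⟨ω, hred, hprod, hsub⟩ := exists_reduced_word_subset cs hK hu
  rcases List.eq_nil_or_concat ω with rfl | ⟨ω', i, rfl⟩
  · exact absurd (by rw [← hprod, cs.wordProd_nil]) hne
  rw [List.concat_eq_append] at *
  have hprod' : u * s i = π ω' := by
    rw [← hprod, cs.wordProd_append, cs.wordProd_singleton, mul_assoc,
      cs.simple_mul_simple_self, mul_one]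
  refine ⟨i, hsub i (List.mem_append_right _ (List.mem_singleton_self i)), ?_, ?_⟩
  · rw [hprod']
    have h1 : ℓ (π ω') ≤ ω'.length := cs.length_wordProd_le _
    have h2 : ℓ u = ω'.length + 1 := by
      rw [← hprod, hred]; simp
    have h3 : ℓ (π ω') + 1 ≥ ℓ u := by
      have := cs.length_mul_le (π ω') (s i)
      rw [← hprod, cs.wordProd_append, cs.wordProd_singleton] at *
      have h4 := cs.length_simple i
      omega
    omega
  · rw [hprod']
    exact wordProd_mem_closure cs (fun j hj => hsub j (List.mem_append_left _ hj))


/-- Length additivity for an element of minimal length in its coset. -/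
theorem length_add_of_min {K : Set W} (hK : K ⊆ Set.range cs.simple) {w₀ : W}
    (hmin : ∀ z ∈ Subgroup.closure K, ℓ w₀ ≤ ℓ (w₀ * z)) :
    ∀ u ∈ Subgroup.closure K, ℓ (w₀ * u) = ℓ w₀ + ℓ u := by
  suffices h : ∀ n : ℕ, ∀ u ∈ Subgroup.closure K, ℓ u ≤ n → ℓ (w₀ * u) = ℓ w₀ + ℓ u by
    intro u hu; exact h (ℓ u) u hu le_rfl
  intro n
  induction n with
  | zero =>
      intro u _ hu0
      have : u = 1 := by rwa [Nat.le_zero, cs.length_eq_zero_iff] at hu0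
      simp [this]
  | succ n ih =>
      intro u hu hun
      by_cases hne : u = 1
      · simp [hne]
      obtain ⟨k, hkK, hkl, hk⟩ := parabolic_descent cs hK hu hne
      have hu'u : (u * s k) * s k = u := by
        rw [mul_assoc, cs.simple_mul_simple_self, mul_one]
      have ihu' : ℓ (w₀ * (u * s k)) = ℓ w₀ + ℓ (u * s k) := ih _ hk (by omega)
      have hass : w₀ * (u * s k) * s k = w₀ * u := by rw [mul_assoc, hu'u]
      rcases cs.length_mul_simple (w₀ * (u * s k)) k with h | h
      · -- increasing case
        rw [hass] at h
        rw [h, ihu']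
        omega
      · -- decreasing case: contradiction
        exfalso
        rw [hass] at h
        obtain ⟨ω₀, hω₀red, hω₀prod⟩ := cs.exists_reduced_word' w₀
        obtain ⟨κ, hκred, hκprod, hκsub⟩ := exists_reduced_word_subset cs hK hk
        have hcat : π (ω₀ ++ κ) = w₀ * (u * s k) := by
          rw [cs.wordProd_append, ← hω₀prod, hκprod]
        have hcatred : cs.IsReduced (ω₀ ++ κ) := by
          rw [CoxeterSystem.IsReduced, hcat, ihu', List.length_append, hω₀prod, ← hκprod,
            hω₀red, hκred]
        have hlt : ℓ ((w₀ * (u * s k)) * s k) < ℓ (w₀ * (u * s k)) := by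
          rw [hass]; omega
        obtain ⟨j, hj, hex⟩ := strong_exchange cs (cs.isReflection_simple k) hlt hcatred hcat
        rw [hass] at hex
        by_cases hcase : j < ω₀.length
        · rw [List.eraseIdx_append_of_lt_length hcase, cs.wordProd_append, hκprod] at hex
          have hzmem : u * (u * s k)⁻¹ ∈ Subgroup.closure K := mul_mem hu (inv_mem hk)
          have hz : w₀ * (u * (u * s k)⁻¹) = π (ω₀.eraseIdx j) := by
            rw [← mul_assoc, hex, mul_assoc, mul_inv_cancel, mul_one]
          have h1 := hmin _ hzmem
          rw [hz] at h1
          have h2 : ℓ (π (ω₀.eraseIdx j)) ≤ (ω₀.eraseIdx j).length :=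
            cs.length_wordProd_le _
          rw [List.length_eraseIdx_of_lt hcase] at h2
          have h3 : ω₀.length = ℓ w₀ := by rw [hω₀prod, hω₀red]
          omega
        · push_neg at hcase
          rw [List.eraseIdx_append_of_length_le hcase, cs.wordProd_append, ← hω₀prod] at hex
          have hex2 : u = π (κ.eraseIdx (j - ω₀.length)) := mul_left_cancel hex
          have h2 : ℓ u ≤ (κ.eraseIdx (j - ω₀.length)).length := by
            rw [hex2]; exact cs.length_wordProd_le _
          have hjlt : j - ω₀.length < κ.length := by
            rw [List.length_append] at hj; omega
          rw [List.length_eraseIdx_of_lt hjlt] at h2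
          have h3 : κ.length = ℓ (u * s k) := by rw [← hκred, hκprod]
          omega

/-- A `minRight` element has minimal length in its coset. -/
theorem min_coset {K : Set W} (hK : K ⊆ Set.range cs.simple) {w : W}
    (hw : w ∈ minRight cs K) : ∀ z ∈ Subgroup.closure K, ℓ w ≤ ℓ (w * z) := by
  classical
  have hex : ∃ n : ℕ, ∃ z ∈ Subgroup.closure K, ℓ (w * z) = n :=
    ⟨ℓ w, 1, one_mem _, by rw [mul_one]⟩
  set n₀ := Nat.find hex with hn₀
  obtain ⟨z₀, hz₀mem, hz₀⟩ := Nat.find_spec hex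
  have hmin : ∀ z ∈ Subgroup.closure K, ℓ (w * z₀) ≤ ℓ (w * z₀ * z) := by
    intro z hz
    rw [hz₀]
    apply Nat.find_min' hex
    exact ⟨z₀ * z, mul_mem hz₀mem hz, by rw [← mul_assoc]⟩
  have hadd := length_add_of_min cs hK hmin
  have hz₀one : z₀ = 1 := by
    by_contra hne
    have hinv : z₀⁻¹ ≠ 1 := fun h => hne (by rwa [inv_eq_one] at h)
    obtain ⟨k, hkK, hkl, hk⟩ := parabolic_descent cs hK (inv_mem hz₀mem) hinv
    have h1 : ℓ (w * s k) = ℓ (w * z₀) + ℓ (z₀⁻¹ * s k) := by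
      have : w * s k = (w * z₀) * (z₀⁻¹ * s k) := by group
      rw [this]
      exact hadd _ (mul_mem (inv_mem hz₀mem) (Subgroup.subset_closure hkK))
    have h2 : ℓ w = ℓ (w * z₀) + ℓ z₀⁻¹ := by
      have h2' := hadd z₀⁻¹ (inv_mem hz₀mem)
      rwa [mul_assoc, mul_inv_cancel, mul_one] at h2'
    have h3 := hw (s k) hkK
    omega
  intro z hz
  have := hmin z hz
  rwa [hz₀one, mul_one] at this

/-- Right additivity: `ℓ(w u) = ℓ(w) + ℓ(u)` for `w ∈ Wᴷ`, `u ∈ W_K`. -/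
theorem length_minRight_mul {K : Set W} (hK : K ⊆ Set.range cs.simple) {w u : W}
    (hw : w ∈ minRight cs K) (hu : u ∈ Subgroup.closure K) :
    ℓ (w * u) = ℓ w + ℓ u :=
  length_add_of_min cs hK (min_coset cs hK hw) u hu

/-- Left additivity: `ℓ(u d) = ℓ(u) + ℓ(d)` for `d ∈ ᴶW`, `u ∈ W_J`. -/
theorem length_mul_minLeft {J : Set W} (hJ : J ⊆ Set.range cs.simple) {d u : W}
    (hd : d ∈ minLeft cs J) (hu : u ∈ Subgroup.closure J) :
    ℓ (u * d) = ℓ u + ℓ d := by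
  have hdinv : d⁻¹ ∈ minRight cs J := by
    intro t ht
    obtain ⟨i, hi⟩ := hJ ht
    have h1 : d⁻¹ * t = (t * d)⁻¹ := by
      rw [← hi, mul_inv_rev, cs.inv_simple]
    rw [h1, cs.length_inv, cs.length_inv]
    exact hd t ht
  have := length_minRight_mul cs hJ hdinv (inv_mem hu)
  have h2 : d⁻¹ * u⁻¹ = (u * d)⁻¹ := by rw [mul_inv_rev]
  rw [h2, cs.length_inv, cs.length_inv, cs.length_inv] at this
  omega

/-- Deodhar-type lemma: forced equality `t₀ d s_k = d`. -/
theorem deodhar {J : Set W} (hJ : J ⊆ Set.range cs.simple) {d : W}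
    (hd : d ∈ minLeft cs J) {i₀ k : B} (hi₀ : s i₀ ∈ J)
    (h1 : ℓ (d * s k) = ℓ d + 1)
    (h2 : ℓ (s i₀ * (d * s k)) < ℓ (d * s k)) :
    s i₀ * d * s k = d := by
  obtain ⟨ω, hωred, hωprod⟩ := cs.exists_reduced_word' d
  -- reduced word for x = s k * d⁻¹
  set x := s k * d⁻¹ with hx
  have hxω : π (k :: ω.reverse) = x := by
    rw [cs.wordProd_cons, cs.wordProd_reverse, ← hωprod]
  have hxlen : ℓ x = ℓ d + 1 := by
    rw [hx]
    have : s k * d⁻¹ = (d * s k)⁻¹ := by rw [mul_inv_rev, cs.inv_simple]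
    rw [this, cs.length_inv, h1]
  have hxred : cs.IsReduced (k :: ω.reverse) := by
    rw [CoxeterSystem.IsReduced, hxω, hxlen]
    simp only [List.length_cons, List.length_reverse]
    rw [CoxeterSystem.IsReduced] at hωred
    rw [← hωred, hωprod]
  have hlt : ℓ (x * s i₀) < ℓ x := by
    have h3 : x * s i₀ = (s i₀ * (d * s k))⁻¹ := by
      rw [hx, mul_inv_rev, mul_inv_rev, cs.inv_simple, cs.inv_simple]
      done
    rw [h3, cs.length_inv, hxlen]
    omega
  obtain ⟨j, hj, hex⟩ := strong_exchange cs (cs.isReflection_simple i₀) hlt hxred hxω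
  match j, hj with
  | 0, _ =>
      rw [List.eraseIdx_cons_zero, cs.wordProd_reverse, ← hωprod] at hex
      have hinv := congrArg (fun y => y⁻¹) hex
      simp only [hx, mul_inv_rev, inv_inv, cs.inv_simple] at hinv
      rw [mul_assoc]
      exact hinv
  | (j' + 1), hj =>
      exfalso
      rw [List.eraseIdx_cons_succ, cs.wordProd_cons] at hex
      have hstep : d⁻¹ * s i₀ = π (ω.reverse.eraseIdx j') := by
        have h' : s k * (x * s i₀) = π (ω.reverse.eraseIdx j') := by
          rw [hex, ← mul_assoc, cs.simple_mul_simple_self, one_mul]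
        rw [← h', hx, ← mul_assoc, ← mul_assoc, cs.simple_mul_simple_self, one_mul]
      have h4 : ℓ (d⁻¹ * s i₀) ≤ (ω.reverse.eraseIdx j').length := by
        rw [hstep]; exact cs.length_wordProd_le _
      have hj'lt : j' < ω.reverse.length := by
        simp only [List.length_cons] at hj
        omega
      rw [List.length_eraseIdx_of_lt hj'lt] at h4
      have h5 : ω.reverse.length = ℓ d := by
        rw [List.length_reverse]
        rw [CoxeterSystem.IsReduced] at hωred
        rw [← hωred, hωprod]
      have h6 : ℓ (d⁻¹ * s i₀) = ℓ (s i₀ * d) := by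
        have : d⁻¹ * s i₀ = (s i₀ * d)⁻¹ := by rw [mul_inv_rev, cs.inv_simple]
        rw [this, cs.length_inv]
      have h7 := hd (s i₀) hi₀
      omega


/-- Kilmoyer's theorem, essentially: `W_J ∩ wb W_K wb⁻¹ ⊆ W_{J ∩ wb K wb⁻¹}`. -/
theorem kilmoyer {J K : Set W} (hJ : J ⊆ Set.range cs.simple)
    (hK : K ⊆ Set.range cs.simple) {wb : W}
    (hwb : wb ∈ minLeft cs J ∩ minRight cs K) :
    ∀ x ∈ Subgroup.closure K, wb * x * wb⁻¹ ∈ Subgroup.closure J →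
      wb * x * wb⁻¹ ∈ Subgroup.closure (J ∩ ((fun y => wb * y * wb⁻¹) '' K)) := by
  suffices h : ∀ n : ℕ, ∀ x ∈ Subgroup.closure K, ℓ x ≤ n →
      wb * x * wb⁻¹ ∈ Subgroup.closure J →
      wb * x * wb⁻¹ ∈ Subgroup.closure (J ∩ ((fun y => wb * y * wb⁻¹) '' K)) by
    intro x hx hu; exact h (ℓ x) x hx le_rfl hu
  intro n
  induction n with
  | zero =>
      intro x _ hx0 _
      have hx1 : x = 1 := by rwa [Nat.le_zero, cs.length_eq_zero_iff] at hx0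
      rw [hx1, mul_one, mul_inv_cancel]
      exact one_mem _
  | succ n ih =>
      intro x hx hxn hu
      by_cases hne : x = 1
      · rw [hne, mul_one, mul_inv_cancel]; exact one_mem _
      obtain ⟨k, hkK, hkl, hk⟩ := parabolic_descent cs hK hx hne
      set u := wb * x * wb⁻¹ with hudef
      -- length bookkeeping
      have hadd1 : ℓ (wb * x) = ℓ wb + ℓ x := length_minRight_mul cs hK hwb.2 hx
      have huwb : u * wb = wb * x := by rw [hudef]; group
      have hadd2 : ℓ (u * wb) = ℓ u + ℓ wb := length_mul_minLeft cs hJ hwb.1 hu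
      have hlu : ℓ u = ℓ x := by rw [huwb, hadd1] at hadd2; omega
      have hadd3 : ℓ (wb * (x * s k)) = ℓ wb + ℓ (x * s k) :=
        length_minRight_mul cs hK hwb.2 hk
      have h1 : ℓ (wb * s k) = ℓ wb + 1 := by
        rcases cs.length_mul_simple wb k with h | h
        · exact h
        · exfalso; have := hwb.2 (s k) hkK; omega
      -- find a left descent of wb * x' in J
      have hx'eq : u * (wb * s k) = wb * (x * s k) := by
        rw [← mul_assoc, huwb, mul_assoc]
      have hlen4 : ℓ (u * (wb * s k)) = ℓ wb + ℓ x - 1 := by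
        rw [hx'eq, hadd3]; omega
      have hexists : ∃ i₀ : B, s i₀ ∈ J ∧ ℓ (s i₀ * (wb * s k)) < ℓ (wb * s k) := by
        by_contra hcon
        push_neg at hcon
        have hmem : wb * s k ∈ minLeft cs J := by
          intro t ht
          obtain ⟨i, hi⟩ := hJ ht
          rw [← hi]
          have hne2 := cs.length_simple_mul_ne (wb * s k) i
          have := hcon i (hi ▸ ht)
          omega
        have := length_mul_minLeft cs hJ hmem hu
        rw [hlen4, h1, hlu] at this
        have hx0 : ℓ x ≠ 0 := fun h0 => hne ((cs.length_eq_zero_iff).mp h0)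
        omega
      obtain ⟨i₀, hi₀J, hi₀lt⟩ := hexists
      have hdeo : s i₀ * wb * s k = wb := deodhar cs hJ hwb.1 hi₀J h1 hi₀lt
      -- t₀ := s i₀ = wb * s k * wb⁻¹
      have ht₀' : s i₀ * wb = wb * s k := by
        conv_rhs => rw [← hdeo]
        rw [mul_assoc (s i₀ * wb), cs.simple_mul_simple_self, mul_one]
      have ht₀ : s i₀ = wb * s k * wb⁻¹ := by
        rw [← ht₀', mul_assoc, mul_inv_cancel, mul_one]
      have ht₀mem : s i₀ ∈ J ∩ ((fun y => wb * y * wb⁻¹) '' K) :=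
        ⟨hi₀J, ⟨s k, hkK, ht₀.symm⟩⟩
      -- u' := u * s i₀ = wb * (x * s k) * wb⁻¹
      have hu' : u * s i₀ = wb * (x * s k) * wb⁻¹ := by
        rw [ht₀, hudef]; group
      have hu'memJ : u * s i₀ ∈ Subgroup.closure J :=
        mul_mem hu (Subgroup.subset_closure hi₀J)
      rw [hu'] at hu'memJ
      have hih := ih (x * s k) hk (by omega) hu'memJ
      rw [← hu'] at hih
      have hfin : (u * s i₀) * s i₀ = u := by
        rw [mul_assoc, cs.simple_mul_simple_self, mul_one]
      rw [← hfin]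
      exact mul_mem hih (Subgroup.subset_closure ht₀mem)


end HowlettAux

/-- Refinement of Howlett's lemma: for `w̄ ∈ ᴶW ∩ Wᴷ`, `K' = K ∩ w̄⁻¹ J w̄` and
`J' = J ∩ w̄ K w̄⁻¹`, if `w ∈ w̄ W_K` then in the unique decomposition `w = u * w̄ * v`
with `u ∈ W_J` and `v ∈ W_K ∩ ᴷ'W` one has `u ∈ W_{J'}`. -/
theorem howlett_refined (cs : CoxeterSystem M W) (J K : Set W)
    (hJ : J ⊆ Set.range cs.simple) (hK : K ⊆ Set.range cs.simple)
    (wb : W) (hwb : wb ∈ minLeft cs J ∩ minRight cs K) (w : W)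
    (hw : ∃ b ∈ Subgroup.closure K, w = wb * b)
    (u v : W) (hu : u ∈ Subgroup.closure J) (hv : v ∈ Subgroup.closure K)
    (hv' : v ∈ minLeft cs (K ∩ ((fun x => wb⁻¹ * x * wb) '' J)))
    (heq : w = u * wb * v) :
    u ∈ Subgroup.closure (J ∩ ((fun x => wb * x * wb⁻¹) '' K)) := by
  obtain ⟨b, hb, rfl⟩ := hw
  have hx : b * v⁻¹ ∈ Subgroup.closure K := mul_mem hb (inv_mem hv)
  have hueq : wb * (b * v⁻¹) * wb⁻¹ = u := by
    have h1 : wb * b * v⁻¹ = u * wb := by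
      rw [heq, mul_assoc, mul_assoc, mul_inv_cancel, mul_one]
    calc wb * (b * v⁻¹) * wb⁻¹ = (wb * b * v⁻¹) * wb⁻¹ := by group
      _ = u * wb * wb⁻¹ := by rw [h1]
      _ = u := by rw [mul_assoc, mul_inv_cancel, mul_one]
  have := HowlettAux.kilmoyer cs hJ hK hwb (b * v⁻¹) hx (by rw [hueq]; exact hu)
  rwa [hueq] at this
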